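/- Let X be a finiteness space and k a field with the discrete topology. Then the topological vector space k⟨X⟩ is Hausdorff, and every Cauchy net in k⟨X⟩ converges (k⟨X⟩ is complete). -/
import Mathlib


namespace Resource

def orth {I : Type*} (F : Set (Set I)) : Set (Set I) := {e' | ∀ e ∈ F, (e ∩ e').Finite}

structure FinSpace (I : Type*) where
  F : Set (Set I)
  biorth : orth (orth F) ⊆ F

lemma subset_biorth {I : Type*} (G : Set (Set I)) : G ⊆ orth (orth G) := by
  intro e he g hg
  have := hg e he
  rwa [Set.inter_comm] at this

lemma orth_anti {I : Type*} {G H : Set (Set I)} (h : G ⊆ H) : orth H ⊆ orth G :=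
  fun g hg e he => hg e (h he)

def FinSpace.ofOrth {I : Type*} (G : Set (Set I)) : FinSpace I :=
  ⟨orth G, orth_anti (subset_biorth G)⟩

lemma FinSpace.empty_mem {I : Type*} (X : FinSpace I) : ∅ ∈ X.F :=
  X.biorth (fun g _ => by simp)

lemma FinSpace.mem_of_subset {I : Type*} (X : FinSpace I) {e f : Set I}
    (he : e ∈ X.F) (h : f ⊆ e) : f ∈ X.F := by
  refine X.biorth (fun g hg => ?_)
  exact ((hg e he).subset (fun x hx => ⟨h hx.2, hx.1⟩))

lemma FinSpace.union_mem {I : Type*} (X : FinSpace I) {e f : Set I}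
    (he : e ∈ X.F) (hf : f ∈ X.F) : e ∪ f ∈ X.F := by
  refine X.biorth (fun g hg => ?_)
  have h1 := hg e he
  have h2 := hg f hf
  rw [Set.inter_comm] at h1 h2
  rw [Set.inter_union_distrib_left]
  exact h1.union h2

def fsSub (k : Type*) [Field k] {I : Type*} (X : FinSpace I) : Submodule k (I → k) where
  carrier := {a | {s | a s ≠ 0} ∈ X.F}
  add_mem' := by
    intro a b ha hb
    refine X.mem_of_subset (X.union_mem ha hb) ?_
    intro s hs
    by_contra h
    simp only [Set.mem_union, Set.mem_setOf_eq, not_or, not_not] at h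
    exact hs (by simp [Pi.add_apply, h.1, h.2])
  zero_mem' := by
    refine X.mem_of_subset X.empty_mem ?_
    intro s hs
    simp at hs
  smul_mem' := by
    intro c a ha
    refine X.mem_of_subset ha ?_
    intro s hs
    by_contra h
    simp only [Set.mem_setOf_eq, not_not] at h
    exact hs (by simp [Pi.smul_apply, h])

def fsTop (k : Type*) [Field k] {I : Type*} (X : FinSpace I) :
    TopologicalSpace (fsSub k X) where
  IsOpen U := ∀ a ∈ U, ∃ e' ∈ orth X.F, ∀ b : fsSub k X, (∀ s ∈ e', b.1 s = a.1 s) → b ∈ U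
  isOpen_univ := by
    intro a _
    exact ⟨∅, fun e _ => by simp, fun b _ => trivial⟩
  isOpen_inter := by
    rintro U V hU hV a ⟨haU, haV⟩
    obtain ⟨e₁, he₁, h₁⟩ := hU a haU
    obtain ⟨e₂, he₂, h₂⟩ := hV a haV
    refine ⟨e₁ ∪ e₂, fun e he => ?_, fun b hb => ?_⟩
    · rw [Set.inter_union_distrib_left]
      exact (he₁ e he).union (he₂ e he)
    · exact ⟨h₁ b (fun s hs => hb s (Or.inl hs)), h₂ b (fun s hs => hb s (Or.inr hs))⟩
  isOpen_sUnion := by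
    rintro 𝒮 h a ⟨U, hU, haU⟩
    obtain ⟨e', he', hb⟩ := h U hU a haU
    exact ⟨e', he', fun b hbs => ⟨U, hU, hb b hbs⟩⟩


universe u

def Wmod (k : Type*) [Field k] {I : Type*} (X : FinSpace I) (e' : Set I) :
    Submodule k (fsSub k X) where
  carrier := {b | ∀ s ∈ e', b.1 s = 0}
  zero_mem' := fun s _ => rfl
  add_mem' := by
    intro b c hb hc s hs
    have : ((b + c : fsSub k X)).1 s = b.1 s + c.1 s := rfl
    rw [this, hb s hs, hc s hs, add_zero]
  smul_mem' := by
    intro r b hb s hs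
    have : ((r • b : fsSub k X)).1 s = r * b.1 s := rfl
    rw [this, hb s hs, mul_zero]

lemma singleton_mem_orth {I : Type*} (X : FinSpace I) (s : I) : {s} ∈ orth X.F :=
  fun _ _ => (Set.finite_singleton s).subset Set.inter_subset_right

theorem statement7 {I : Type*} (k : Type*) [Field k] (X : FinSpace I) :
    letI : TopologicalSpace (fsSub k X) := fsTop k X
    T2Space (fsSub k X) ∧
    ∀ (Γ : Type u) [Preorder Γ] [Nonempty Γ], IsDirected Γ (· ≤ ·) →
      ∀ a : Γ → fsSub k X,
        (∀ V : Submodule k (fsSub k X), IsOpen (V : Set (fsSub k X)) →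
          ∃ γ, ∀ δ, γ ≤ δ → a δ - a γ ∈ V) →
        ∃ L : fsSub k X, ∀ V : Submodule k (fsSub k X), IsOpen (V : Set (fsSub k X)) →
          ∃ γ, ∀ δ, γ ≤ δ → a δ - L ∈ V := by
  letI : TopologicalSpace (fsSub k X) := fsTop k X
  have hWopen : ∀ e' ∈ orth X.F,
      IsOpen ((Wmod k X e' : Submodule k (fsSub k X)) : Set (fsSub k X)) := by
    intro e' he' c hc
    exact ⟨e', he', fun b hb s hs => by rw [hb s hs]; exact hc s hs⟩
  have hsub : ∀ (b c : fsSub k X) (s : I), ((b - c : fsSub k X)).1 s = b.1 s - c.1 s :=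
    fun _ _ _ => rfl
  constructor
  · constructor
    intro x y hxy
    have : ∃ s, x.1 s ≠ y.1 s := by
      by_contra h; push_neg at h; exact hxy (Subtype.ext (funext h))
    obtain ⟨s, hs⟩ := this
    refine ⟨{c | c.1 s = x.1 s}, {c | c.1 s = y.1 s}, ?_, ?_, rfl, rfl, ?_⟩
    · intro c hc
      exact ⟨{s}, singleton_mem_orth X s, fun d hd => by
        show d.1 s = x.1 s; rw [hd s rfl]; exact hc⟩
    · intro c hc
      exact ⟨{s}, singleton_mem_orth X s, fun d hd => by
        show d.1 s = y.1 s; rw [hd s rfl]; exact hc⟩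
    · rw [Set.disjoint_left]
      intro c h1 h2
      exact hs (h1 ▸ h2)
  · intro Γ _ _ hdir a hC
    haveI := hdir
    choose γf hγf using fun s : I =>
      hC (Wmod k X {s}) (hWopen _ (singleton_mem_orth X s))
    set L : I → k := fun s => (a (γf s)).1 s with hLdef
    have hLev : ∀ (s : I) (δ : Γ), γf s ≤ δ → (a δ).1 s = L s := by
      intro s δ h
      have h1 := hγf s δ h s rfl
      rw [hsub] at h1
      exact sub_eq_zero.mp h1
    have hL : L ∈ fsSub k X := by
      refine X.biorth ?_
      intro e' he'
      obtain ⟨γ, hγ⟩ := hC (Wmod k X e') (hWopen _ he')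
      have hss : e' ∩ {s | L s ≠ 0} ⊆ {s | (a γ).1 s ≠ 0} ∩ e' := by
        rintro s ⟨hse, hsL⟩
        obtain ⟨δ, hδ1, hδ2⟩ := directed_of (· ≤ ·) γ (γf s)
        have h1 := hγ δ hδ1 s hse
        rw [hsub] at h1
        refine ⟨?_, hse⟩
        rw [Set.mem_setOf_eq, ← sub_eq_zero.mp h1, hLev s δ hδ2]
        exact hsL
      exact ((he' _ ((a γ).2)).subset hss)
    refine ⟨⟨L, hL⟩, ?_⟩
    intro V hV
    obtain ⟨e'', he'', h0⟩ := hV 0 V.zero_mem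
    obtain ⟨γ, hγ⟩ := hC (Wmod k X e'') (hWopen _ he'')
    refine ⟨γ, fun δ hδ => ?_⟩
    refine h0 _ (fun s hs => ?_)
    show ((a δ - ⟨L, hL⟩ : fsSub k X)).1 s = (0 : fsSub k X).1 s
    rw [hsub]
    show (a δ).1 s - L s = 0
    rw [sub_eq_zero]
    obtain ⟨δ', h1, h2⟩ := directed_of (· ≤ ·) δ (γf s)
    have e1 := hγ δ' (le_trans hδ h1) s hs
    have e2 := hγ δ hδ s hs
    rw [hsub] at e1 e2
    calc (a δ).1 s = (a γ).1 s := sub_eq_zero.mp e2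
      _ = (a δ').1 s := (sub_eq_zero.mp e1).symm
      _ = L s := hLev s δ' h2

end Resource
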